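/- Let U : B₁ ⊗ Q₁ → F ⊗ Q₂ be a unitary and define Λ : L(Q₁) → L(Q₂) by Λ(ρ) = Tr_F[U(ρ ⊗ ω_{B₁})U†], where ω_{B₁} = I/dim(B₁). Then for every density matrix η on Q₁, H(Λ(η)) − H(η) ≥ log₂(dim(Q₂)/dim(Q₁)) = log₂(dim(B₁)/dim(F)). -/

import Mathlib

open Matrix
open scoped ComplexOrder

/-- Matrix base-2 logarithm of a Hermitian matrix, via spectral decomposition
(junk value `0` on non-Hermitian input). -/
noncomputable def mlog2 {n : Type*} [Fintype n] [DecidableEq n]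
    (A : Matrix n n ℂ) : Matrix n n ℂ :=
  if hA : A.IsHermitian then
    (hA.eigenvectorUnitary : Matrix n n ℂ) *
      Matrix.diagonal (fun i => (Real.logb 2 (hA.eigenvalues i) : ℂ)) *
      star (hA.eigenvectorUnitary : Matrix n n ℂ)
  else 0

/-- Von Neumann entropy (base 2): `H(ρ) = -Tr[ρ log₂ ρ]`. -/
noncomputable def vnEntropy {n : Type*} [Fintype n] [DecidableEq n]
    (ρ : Matrix n n ℂ) : ℝ :=
  -(ρ * mlog2 ρ).trace.re
open Kronecker
/-- The channel `Λ(ρ) = Tr_F[U (ω_{B₁} ⊗ ρ) U†]`, where `ω_{B₁}` is the maximally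
mixed state on `B₁` and `U : B₁ ⊗ Q₁ → F ⊗ Q₂` (a completely factorizable channel). -/
noncomputable def factorizableChannel (b q1 f q2 : ℕ)
    (U : Matrix (Fin f × Fin q2) (Fin b × Fin q1) ℂ)
    (ρ : Matrix (Fin q1) (Fin q1) ℂ) : Matrix (Fin q2) (Fin q2) ℂ :=
  Matrix.of fun p q : Fin q2 =>
    ∑ x : Fin f,
      (U * (((b : ℂ)⁻¹ • (1 : Matrix (Fin b) (Fin b) ℂ)) ⊗ₖ ρ) * Uᴴ) (x, p) (x, q)


section Helpers
open Polynomial Finset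
set_option linter.unusedSectionVars false
set_option linter.unusedVariables false
set_option maxHeartbeats 2000000



lemma gibbs_aux {ι : Type*} [Fintype ι] (p r : ι → ℝ) (hp : ∀ i, 0 ≤ p i)
    (hr : ∀ i, 0 ≤ r i) (hs : ∀ i, 0 < p i → 0 < r i)
    (hsum : ∑ i, r i ≤ ∑ i, p i) :
    ∑ i, p i * Real.logb 2 (r i) ≤ ∑ i, p i * Real.logb 2 (p i) := by
  have key : ∀ i, p i * Real.log (r i) - p i * Real.log (p i) ≤ r i - p i := by
    intro i
    rcases eq_or_lt_of_le (hp i) with h | h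
    · simp [← h, hr i]
    · have hri := hs i h
      have := Real.log_le_sub_one_of_pos (x := r i / p i) (by positivity)
      rw [Real.log_div (ne_of_gt hri) (ne_of_gt h)] at this
      have h2 : p i * (Real.log (r i) - Real.log (p i)) ≤ p i * (r i / p i - 1) :=
        mul_le_mul_of_nonneg_left this (le_of_lt h)
      rw [mul_sub, mul_sub, mul_div_cancel₀ _ (ne_of_gt h), mul_one] at h2
      linarith
  have hsum2 : ∑ i, (p i * Real.log (r i) - p i * Real.log (p i)) ≤ 0 := by
    calc ∑ i, (p i * Real.log (r i) - p i * Real.log (p i))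
        ≤ ∑ i, (r i - p i) := Finset.sum_le_sum fun i _ => key i
      _ ≤ 0 := by rw [Finset.sum_sub_distrib]; linarith
  rw [Finset.sum_sub_distrib] at hsum2
  simp only [Real.logb, div_eq_mul_inv, ← mul_assoc, ← Finset.sum_mul]
  have h2 : (0:ℝ) < (Real.log 2)⁻¹ := inv_pos.mpr (Real.log_pos one_lt_two)
  exact mul_le_mul_of_nonneg_right (by linarith) (le_of_lt h2)

lemma jensen_aux {ι : Type*} [Fintype ι] (c q : ι → ℝ) (hc : ∀ i, 0 ≤ c i)
    (hq : ∀ i, 0 ≤ q i) (hcs : ∑ i, c i = 1) (hs : ∀ i, 0 < c i → 0 < q i) :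
    ∑ i, c i * Real.logb 2 (q i) ≤ Real.logb 2 (∑ i, c i * q i) := by
  set S := ∑ i, c i * q i with hS
  have hS0 : 0 < S := by
    rcases (Finset.sum_nonneg (fun i _ => mul_nonneg (hc i) (hq i))).lt_or_eq with h | h
    · exact h
    · exfalso
      have hall : ∀ i ∈ Finset.univ, c i * q i = 0 :=
        (Finset.sum_eq_zero_iff_of_nonneg (fun i _ => mul_nonneg (hc i) (hq i))).1 h.symm
      have : ∑ i, c i = 0 := by
        apply Finset.sum_eq_zero
        intro i _
        by_contra hne
        have hci : 0 < c i := lt_of_le_of_ne (hc i) (Ne.symm hne)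
        have := mul_pos hci (hs i hci)
        rw [hall i (Finset.mem_univ i)] at this
        exact lt_irrefl 0 this
      rw [hcs] at this; norm_num at this
  have key : ∀ i, c i * Real.log (q i) - c i * Real.log S ≤ c i * q i / S - c i := by
    intro i
    rcases eq_or_lt_of_le (hc i) with h | h
    · simp [← h]
    · have hqi := hs i h
      have := Real.log_le_sub_one_of_pos (x := q i / S) (by positivity)
      rw [Real.log_div (ne_of_gt hqi) (ne_of_gt hS0)] at this
      have h2 := mul_le_mul_of_nonneg_left this (le_of_lt h)
      rw [mul_sub, mul_sub, mul_one] at h2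
      calc c i * Real.log (q i) - c i * Real.log S ≤ c i * (q i / S) - c i := by linarith
        _ = c i * q i / S - c i := by ring_nf
  have hsum2 : ∑ i, (c i * Real.log (q i) - c i * Real.log S) ≤ 0 := by
    calc ∑ i, (c i * Real.log (q i) - c i * Real.log S)
        ≤ ∑ i, (c i * q i / S - c i) := Finset.sum_le_sum fun i _ => key i
      _ = (∑ i, c i * q i) / S - ∑ i, c i := by
          rw [Finset.sum_sub_distrib, Finset.sum_div]
      _ = 0 := by rw [← hS, div_self (ne_of_gt hS0), hcs]; ring
  rw [Finset.sum_sub_distrib, ← Finset.sum_mul, hcs, one_mul] at hsum2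
  simp only [Real.logb, div_eq_mul_inv, ← mul_assoc, ← Finset.sum_mul]
  have h2 : (0:ℝ) < (Real.log 2)⁻¹ := inv_pos.mpr (Real.log_pos one_lt_two)
  exact mul_le_mul_of_nonneg_right (by linarith) (le_of_lt h2)

lemma klein_scalar {ι κ : Type*} [Fintype ι] [Fintype κ] (p : ι → ℝ) (q : κ → ℝ)
    (c : ι → κ → ℝ) (hp : ∀ i, 0 ≤ p i) (hq : ∀ j, 0 ≤ q j) (hc : ∀ i j, 0 ≤ c i j)
    (hrow : ∀ i, ∑ j, c i j = 1) (hcol : ∀ j, ∑ i, c i j = 1)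
    (hps : ∑ i, p i = 1) (hqs : ∑ j, q j = 1)
    (hsupp : ∀ i j, q j = 0 → p i * c i j = 0) :
    ∑ i, ∑ j, p i * c i j * Real.logb 2 (q j) ≤ ∑ i, p i * Real.logb 2 (p i) := by
  set r : ι → ℝ := fun i => ∑ j, c i j * q j with hr
  have hr0 : ∀ i, 0 ≤ r i := fun i =>
    Finset.sum_nonneg fun j _ => mul_nonneg (hc i j) (hq j)
  have hsupp' : ∀ i j, 0 < p i → 0 < c i j → 0 < q j := by
    intro i j hpi hcij
    rcases (hq j).lt_or_eq with h | h
    · exact h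
    · exfalso
      have := hsupp i j h.symm
      rcases mul_eq_zero.1 this with h' | h'
      · exact absurd h' (ne_of_gt hpi)
      · exact absurd h' (ne_of_gt hcij)
  have hrpos : ∀ i, 0 < p i → 0 < r i := by
    intro i hpi
    rcases (hr0 i).lt_or_eq with h | h
    · exact h
    · exfalso
      have hall : ∀ j ∈ Finset.univ, c i j * q j = 0 :=
        (Finset.sum_eq_zero_iff_of_nonneg (fun j _ => mul_nonneg (hc i j) (hq j))).1 h.symm
      have : ∑ j, c i j = 0 := by
        apply Finset.sum_eq_zero
        intro j _
        by_contra hne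
        have hcij : 0 < c i j := lt_of_le_of_ne (hc i j) (Ne.symm hne)
        have := mul_pos hcij (hsupp' i j hpi hcij)
        rw [hall j (Finset.mem_univ j)] at this
        exact lt_irrefl 0 this
      rw [hrow i] at this; norm_num at this
  have step1 : ∀ i, ∑ j, p i * c i j * Real.logb 2 (q j) ≤ p i * Real.logb 2 (r i) := by
    intro i
    rcases eq_or_lt_of_le (hp i) with h | h
    · simp [← h]
    · have hj := jensen_aux (c i) q (hc i) hq (hrow i) (fun j hcij => hsupp' i j h hcij)
      calc ∑ j, p i * c i j * Real.logb 2 (q j)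
          = p i * ∑ j, c i j * Real.logb 2 (q j) := by
            rw [Finset.mul_sum]; congr 1; ext j; ring
        _ ≤ p i * Real.logb 2 (r i) := mul_le_mul_of_nonneg_left hj (le_of_lt h)
  have step2 : ∑ i, r i ≤ ∑ i, p i := by
    have : ∑ i, r i = ∑ j, q j := by
      rw [hr]
      rw [Finset.sum_comm]
      simp_rw [← Finset.sum_mul, hcol, one_mul]
    rw [this, hqs, hps]
  calc ∑ i, ∑ j, p i * c i j * Real.logb 2 (q j)
      ≤ ∑ i, p i * Real.logb 2 (r i) := Finset.sum_le_sum fun i _ => step1 i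
    _ ≤ ∑ i, p i * Real.logb 2 (p i) := gibbs_aux p r hp hr0 hrpos step2

variable {n m : Type*} [Fintype n] [DecidableEq n] [Fintype m] [DecidableEq m]




lemma card_eq_of_unitary (W : Matrix n m ℂ) (hW1 : W * Wᴴ = 1) (hW2 : Wᴴ * W = 1) :
    Fintype.card m = Fintype.card n := by
  have h := trace_mul_comm W Wᴴ
  rw [hW1, hW2, trace_one, trace_one] at h
  exact_mod_cast h.symm

lemma trace_conj (W : Matrix n m ℂ) (hW2 : Wᴴ * W = 1) (M : Matrix m m ℂ) :
    (W * M * Wᴴ).trace = M.trace := by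
  rw [trace_mul_comm (W * M) Wᴴ, ← Matrix.mul_assoc, hW2, Matrix.one_mul]

lemma diag_real_hermitian (d : m → ℝ) :
    (Matrix.diagonal (fun i => (d i : ℂ))).IsHermitian := by
  rw [Matrix.IsHermitian, diagonal_conjTranspose]
  have h : (star fun i => ((d i : ℂ))) = fun i => ((d i : ℂ)) := by
    funext i; exact Complex.conj_ofReal (d i)
  rw [h]

lemma isHermitian_conj_diag (W : Matrix n m ℂ) (d : m → ℝ) :
    (W * Matrix.diagonal (fun i => (d i : ℂ)) * Wᴴ).IsHermitian :=
  Matrix.isHermitian_mul_mul_conjTranspose W (diag_real_hermitian d)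

lemma posSemidef_conj_diag (W : Matrix n m ℂ) (d : m → ℝ) (hd : ∀ i, 0 ≤ d i) :
    (W * Matrix.diagonal (fun i => (d i : ℂ)) * Wᴴ).PosSemidef := by
  have : (Matrix.diagonal (fun i => (d i : ℂ))).PosSemidef := by
    rw [posSemidef_diagonal_iff]
    intro i
    exact_mod_cast Complex.zero_le_real.2 (hd i)
  exact this.mul_mul_conjTranspose_same W

lemma trace_mul_diagonal (M : Matrix m m ℂ) (d : m → ℂ) :
    (M * Matrix.diagonal d).trace = ∑ i, M i i * d i := by
  simp [Matrix.trace, Matrix.diag, Matrix.mul_apply, Matrix.diagonal]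

lemma trace_conj_diag (σ : Matrix n n ℂ) (W : Matrix n m ℂ) (D : m → ℂ) :
    (σ * (W * Matrix.diagonal D * Wᴴ)).trace = ∑ j, (Wᴴ * σ * W) j j * D j := by
  have h : σ * (W * Matrix.diagonal D * Wᴴ) = σ * W * Matrix.diagonal D * Wᴴ := by
    rw [← Matrix.mul_assoc, ← Matrix.mul_assoc]
  rw [h, trace_mul_comm (σ * W * Matrix.diagonal D) Wᴴ, ← Matrix.mul_assoc,
    ← Matrix.mul_assoc, ← trace_mul_diagonal]

lemma charpoly_diagonal (d : n → ℂ) :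
    (Matrix.diagonal d).charpoly = ∏ i, (X - C (d i)) := by
  rw [Matrix.charpoly]
  have : charmatrix (Matrix.diagonal d) = Matrix.diagonal (fun i => (X : ℂ[X]) - C (d i)) := by
    ext i j
    by_cases h : i = j
    · subst h; simp [charmatrix_apply_eq]
    · simp [charmatrix_apply_ne _ _ _ h, Matrix.diagonal_apply_ne _ h]
  rw [this, Matrix.det_diagonal]

lemma charpoly_unitary_conj (W A : Matrix n n ℂ) (hW1 : W * Wᴴ = 1) (hW2 : Wᴴ * W = 1) :
    (W * A * Wᴴ).charpoly = A.charpoly := by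
  have hm1 : (C : ℂ →+* ℂ[X]).mapMatrix W * (C : ℂ →+* ℂ[X]).mapMatrix Wᴴ = 1 := by
    rw [← _root_.map_mul ((C : ℂ →+* ℂ[X]).mapMatrix), hW1, _root_.map_one]
  have key : charmatrix (W * A * Wᴴ) =
      (C : ℂ →+* ℂ[X]).mapMatrix W * charmatrix A * (C : ℂ →+* ℂ[X]).mapMatrix Wᴴ := by
    unfold charmatrix
    rw [Matrix.mul_sub, Matrix.sub_mul]
    congr 1
    · have hcomm := (Matrix.scalar_commute (X : ℂ[X])
        (fun r' => Commute.all _ _) ((C : ℂ →+* ℂ[X]).mapMatrix W)).symm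
      calc Matrix.scalar n (X : ℂ[X])
          = Matrix.scalar n (X : ℂ[X]) * 1 := by rw [Matrix.mul_one]
        _ = Matrix.scalar n (X : ℂ[X]) *
            ((C : ℂ →+* ℂ[X]).mapMatrix W * (C : ℂ →+* ℂ[X]).mapMatrix Wᴴ) := by rw [hm1]
        _ = (C : ℂ →+* ℂ[X]).mapMatrix W * Matrix.scalar n (X : ℂ[X]) *
            (C : ℂ →+* ℂ[X]).mapMatrix Wᴴ := by
              rw [← Matrix.mul_assoc, hcomm]
    · rw [← _root_.map_mul ((C : ℂ →+* ℂ[X]).mapMatrix),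
        ← _root_.map_mul ((C : ℂ →+* ℂ[X]).mapMatrix)]
  rw [Matrix.charpoly, Matrix.charpoly, key, Matrix.det_mul, Matrix.det_mul]
  have hd : ((C : ℂ →+* ℂ[X]).mapMatrix W).det * ((C : ℂ →+* ℂ[X]).mapMatrix Wᴴ).det = 1 := by
    rw [← Matrix.det_mul, hm1, Matrix.det_one]
  calc ((C : ℂ →+* ℂ[X]).mapMatrix W).det * (charmatrix A).det *
        ((C : ℂ →+* ℂ[X]).mapMatrix Wᴴ).det
      = (charmatrix A).det * (((C : ℂ →+* ℂ[X]).mapMatrix W).det *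
        ((C : ℂ →+* ℂ[X]).mapMatrix Wᴴ).det) := by ring
    _ = (charmatrix A).det := by rw [hd, mul_one]




lemma conj_diag_apply (W : Matrix n m ℂ) (D : m → ℂ) (i j : n) :
    (W * Matrix.diagonal D * Wᴴ) i j = ∑ k, W i k * D k * star (W j k) := by
  simp [Matrix.mul_apply, Matrix.diagonal, conjTranspose_apply, Finset.sum_mul,
    Finset.mul_sum, mul_ite, ite_mul]

lemma conj_reindex_eq (W : Matrix n m ℂ) (D : m → ℂ) (e : n ≃ m) :
    (W.submatrix id ⇑e) * Matrix.diagonal (fun k => D (e k)) * (W.submatrix id ⇑e)ᴴ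
      = W * Matrix.diagonal D * Wᴴ := by
  ext i j
  rw [conj_diag_apply, conj_diag_apply]
  exact Equiv.sum_comp e (fun l => W i l * D l * star (W j l))

lemma submatrix_unitary_left (W : Matrix n m ℂ) (hW1 : W * Wᴴ = 1) (e : n ≃ m) :
    (W.submatrix id ⇑e) * (W.submatrix id ⇑e)ᴴ = 1 := by
  ext i j
  have h := congrFun (congrFun hW1 i) j
  rw [Matrix.mul_apply] at h
  rw [Matrix.mul_apply]
  simp only [conjTranspose_apply, submatrix_apply, id]
  rw [← h]
  exact Equiv.sum_comp e (fun l => W i l * star (W j l))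

lemma submatrix_unitary_right (W : Matrix n m ℂ) (hW2 : Wᴴ * W = 1) (e : n ≃ m) :
    (W.submatrix id ⇑e)ᴴ * (W.submatrix id ⇑e) = 1 := by
  ext k l
  have h := congrFun (congrFun hW2 (e k)) (e l)
  rw [Matrix.mul_apply] at h
  simp only [conjTranspose_apply] at h
  rw [Matrix.mul_apply]
  simp only [conjTranspose_apply, submatrix_apply, id]
  rw [h]
  by_cases hkl : k = l
  · subst hkl; simp
  · rw [Matrix.one_apply_ne (fun hc => hkl (e.injective hc)),
      Matrix.one_apply_ne hkl]

lemma prod_X_sub_C_multiset (g : n → ℂ) :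
    ∏ i, (X - C (g i)) = ((Finset.univ.val.map g).map (fun a => X - C a)).prod := by
  rw [Finset.prod]
  rw [Multiset.map_map]
  rfl

lemma multiset_eq_of_prod_eq (g : n → ℂ) (h : m → ℂ)
    (heq : ∏ i, (X - C (g i)) = ∏ i, (X - C (h i))) :
    Finset.univ.val.map g = Finset.univ.val.map h := by
  have h1 := congrArg Polynomial.roots
    ((prod_X_sub_C_multiset g).symm.trans (heq.trans (prod_X_sub_C_multiset h)))
  rwa [roots_multiset_prod_X_sub_C, roots_multiset_prod_X_sub_C] at h1

lemma sum_f_of_multiset_eq (g : n → ℂ) (h : m → ℂ) (f : ℂ → ℝ)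
    (heq : Finset.univ.val.map g = Finset.univ.val.map h) :
    ∑ i, f (g i) = ∑ i, f (h i) := by
  have h1 := congrArg (fun s => (Multiset.map f s).sum) heq
  simp only [Multiset.map_map, Function.comp] at h1
  rw [Finset.sum, Finset.sum]
  exact h1

lemma sum_f_eigenvalues (W : Matrix n m ℂ) (hW1 : W * Wᴴ = 1) (hW2 : Wᴴ * W = 1)
    (d : m → ℝ)
    (hH : (W * Matrix.diagonal (fun i => (d i : ℂ)) * Wᴴ).IsHermitian) (f : ℝ → ℝ) :
    ∑ i, f (hH.eigenvalues i) = ∑ i, f (d i) := by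
  have e : n ≃ m := Fintype.equivOfCardEq (card_eq_of_unitary W hW1 hW2).symm
  have h1 : (W * Matrix.diagonal (fun i => (d i : ℂ)) * Wᴴ).charpoly
      = ∏ k : n, (X - C ((d (e k) : ℂ))) := by
    rw [← conj_reindex_eq W (fun i => (d i : ℂ)) e,
      charpoly_unitary_conj _ _ (submatrix_unitary_left W hW1 e)
        (submatrix_unitary_right W hW2 e),
      _root_.charpoly_diagonal]
  have h2 : (W * Matrix.diagonal (fun i => (d i : ℂ)) * Wᴴ).charpoly
      = ∏ i : n, (X - C ((hH.eigenvalues i : ℂ))) := by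
    have hsp := hH.spectral_theorem
    set V := (hH.eigenvectorUnitary : Matrix n n ℂ) with hV
    have hV1 : V * Vᴴ = 1 := by
      have h := hH.eigenvectorUnitary.2
      rw [Matrix.mem_unitaryGroup_iff, Matrix.star_eq_conjTranspose] at h
      exact h
    have hV2 : Vᴴ * V = 1 := by
      have h := hH.eigenvectorUnitary.2
      rw [Matrix.mem_unitaryGroup_iff', Matrix.star_eq_conjTranspose] at h
      exact h
    rw [Unitary.conjStarAlgAut_apply, Matrix.star_eq_conjTranspose] at hsp
    conv_lhs => rw [hsp]
    rw [charpoly_unitary_conj _ _ hV1 hV2]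
    have : (RCLike.ofReal ∘ hH.eigenvalues : n → ℂ) = fun i => (hH.eigenvalues i : ℂ) := rfl
    rw [this, _root_.charpoly_diagonal]
  have hms := multiset_eq_of_prod_eq _ _ (h2.symm.trans h1)
  have hsum := sum_f_of_multiset_eq (fun i => (hH.eigenvalues i : ℂ))
    (fun k => ((d (e k)) : ℂ)) (fun z => f z.re) hms
  simp only [Complex.ofReal_re] at hsum
  rw [hsum]
  exact Equiv.sum_comp e (fun i => f (d i))


lemma conj_mul_conj (V : Matrix n n ℂ) (hV2 : Vᴴ * V = 1) (M N : Matrix n n ℂ) :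
    (V * M * Vᴴ) * (V * N * Vᴴ) = V * (M * N) * Vᴴ := by
  have h : Vᴴ * (V * N * Vᴴ) = N * Vᴴ := by
    rw [← Matrix.mul_assoc, ← Matrix.mul_assoc, hV2, Matrix.one_mul]
  rw [Matrix.mul_assoc (V * M) Vᴴ _, h, ← Matrix.mul_assoc, Matrix.mul_assoc V M N]

lemma eigenvectorUnitary_unitary {A : Matrix n n ℂ} (hH : A.IsHermitian) :
    ((hH.eigenvectorUnitary : Matrix n n ℂ) * (hH.eigenvectorUnitary : Matrix n n ℂ)ᴴ = 1)
    ∧ ((hH.eigenvectorUnitary : Matrix n n ℂ)ᴴ * (hH.eigenvectorUnitary : Matrix n n ℂ) = 1) := by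
  constructor
  · have h := hH.eigenvectorUnitary.2
    rw [Matrix.mem_unitaryGroup_iff, Matrix.star_eq_conjTranspose] at h
    exact h
  · have h := hH.eigenvectorUnitary.2
    rw [Matrix.mem_unitaryGroup_iff', Matrix.star_eq_conjTranspose] at h
    exact h

lemma entropy_conj_diag (W : Matrix n m ℂ) (hW1 : W * Wᴴ = 1) (hW2 : Wᴴ * W = 1) (d : m → ℝ) :
    vnEntropy (W * Matrix.diagonal (fun i => (d i : ℂ)) * Wᴴ)
      = -∑ i, d i * Real.logb 2 (d i) := by
  set A := W * Matrix.diagonal (fun i => (d i : ℂ)) * Wᴴ with hAdef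
  have hH : A.IsHermitian := isHermitian_conj_diag W d
  rw [vnEntropy, mlog2, dif_pos hH]
  set V := (hH.eigenvectorUnitary : Matrix n n ℂ) with hVdef
  obtain ⟨hV1, hV2⟩ := eigenvectorUnitary_unitary hH
  have hsp := hH.spectral_theorem
  rw [Unitary.conjStarAlgAut_apply, Matrix.star_eq_conjTranspose] at hsp
  have key : (A * (V * Matrix.diagonal (fun i => (Real.logb 2 (hH.eigenvalues i) : ℂ)) * star V)).trace
      = ((∑ i, hH.eigenvalues i * Real.logb 2 (hH.eigenvalues i) : ℝ) : ℂ) := by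
    rw [Matrix.star_eq_conjTranspose]
    rw [congrArg (fun M => (M * (V * Matrix.diagonal
      (fun i => (Real.logb 2 (hH.eigenvalues i) : ℂ)) * Vᴴ)).trace) hsp]
    rw [conj_mul_conj V hV2, trace_conj V hV2, diagonal_mul_diagonal, trace_diagonal]
    push_cast
    rfl
  rw [key]
  rw [Complex.ofReal_re]
  have := sum_f_eigenvalues W hW1 hW2 d hH (fun x => x * Real.logb 2 x)
  rw [this]

lemma trace_conj_diag_val (W : Matrix n m ℂ) (hW2 : Wᴴ * W = 1) (d : m → ℝ) :
    (W * Matrix.diagonal (fun i => (d i : ℂ)) * Wᴴ).trace = ((∑ i, d i : ℝ) : ℂ) := by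
  rw [trace_conj W hW2, trace_diagonal]
  push_cast
  rfl

lemma klein_matrix (σ : Matrix n n ℂ) (hσ : σ.PosSemidef) (hσ1 : σ.trace = 1)
    (W : Matrix n n ℂ) (hW1 : W * Wᴴ = 1) (hW2 : Wᴴ * W = 1)
    (q : n → ℝ) (hq : ∀ j, 0 ≤ q j) (hqs : ∑ j, q j = 1)
    (hsupp : ∀ j, q j = 0 → (Wᴴ * σ * W) j j = 0) :
    (σ * (W * Matrix.diagonal (fun j => (Real.logb 2 (q j) : ℂ)) * Wᴴ)).trace.re
      ≤ -(vnEntropy σ) := by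
  have hH : σ.IsHermitian := hσ.1
  set V := (hH.eigenvectorUnitary : Matrix n n ℂ) with hVdef
  obtain ⟨hV1, hV2⟩ := eigenvectorUnitary_unitary hH
  set p := hH.eigenvalues with hpdef
  have hp : ∀ i, 0 ≤ p i := fun i => hσ.eigenvalues_nonneg i
  have hsp : σ = V * Matrix.diagonal (fun i => (p i : ℂ)) * Vᴴ := by
    have h := hH.spectral_theorem
    rw [Unitary.conjStarAlgAut_apply, Matrix.star_eq_conjTranspose] at h
    exact h
  have hent : vnEntropy σ = -∑ i, p i * Real.logb 2 (p i) :=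
    (congrArg vnEntropy hsp).trans (entropy_conj_diag V hV1 hV2 p)
  have hps : ∑ i, p i = 1 := by
    have h := (congrArg Matrix.trace hsp).trans (trace_conj_diag_val V hV2 p)
    rw [hσ1] at h
    exact_mod_cast h.symm
  set M := Vᴴ * W with hMdef
  set c : n → n → ℝ := fun i j => Complex.normSq (M i j) with hcdef
  have hc : ∀ i j, 0 ≤ c i j := fun i j => Complex.normSq_nonneg _
  have hconj : Wᴴ * σ * W = Mᴴ * Matrix.diagonal (fun i => (p i : ℂ)) * M := by
    rw [hMdef, conjTranspose_mul, conjTranspose_conjTranspose]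
    rw [congrArg (fun S => Wᴴ * S * W) hsp]
    simp only [Matrix.mul_assoc]
  have hz : ∀ j, (Wᴴ * σ * W) j j = ((∑ i, p i * c i j : ℝ) : ℂ) := by
    intro j
    rw [hconj]
    have e1 : (Mᴴ * Matrix.diagonal (fun i => (p i : ℂ)) * M) j j
        = ∑ i, star (M i j) * (p i : ℂ) * M i j := by
      rw [Matrix.mul_apply]
      apply Finset.sum_congr rfl
      intro i _
      rw [Matrix.mul_diagonal, conjTranspose_apply]
    rw [e1]
    push_cast
    apply Finset.sum_congr rfl
    intro i _
    have h2 : star (M i j) * (p i : ℂ) * M i j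
        = (p i : ℂ) * (M i j * star (M i j)) := by ring
    rw [h2, RCLike.star_def, Complex.mul_conj]
  have hMM1 : M * Mᴴ = 1 := by
    rw [hMdef, conjTranspose_mul, conjTranspose_conjTranspose, Matrix.mul_assoc,
      ← Matrix.mul_assoc W Wᴴ V, hW1, Matrix.one_mul, hV2]
  have hMM2 : Mᴴ * M = 1 := by
    rw [hMdef, conjTranspose_mul, conjTranspose_conjTranspose, Matrix.mul_assoc,
      ← Matrix.mul_assoc V Vᴴ W, hV1, Matrix.one_mul, hW2]
  have hrow : ∀ i, ∑ j, c i j = 1 := by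
    intro i
    have h := congrFun (congrFun hMM1 i) i
    rw [Matrix.mul_apply] at h
    have h3 : ∑ j, M i j * Mᴴ j i = ((∑ j, c i j : ℝ) : ℂ) := by
      push_cast
      apply Finset.sum_congr rfl
      intro j _
      rw [conjTranspose_apply, RCLike.star_def, Complex.mul_conj]
    rw [h3, Matrix.one_apply_eq] at h
    exact_mod_cast h
  have hcol : ∀ j, ∑ i, c i j = 1 := by
    intro j
    have h := congrFun (congrFun hMM2 j) j
    rw [Matrix.mul_apply] at h
    have h3 : ∑ i, Mᴴ j i * M i j = ((∑ i, c i j : ℝ) : ℂ) := by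
      push_cast
      apply Finset.sum_congr rfl
      intro i _
      have h4 : Mᴴ j i * M i j = M i j * star (M i j) := by
        rw [conjTranspose_apply]; ring
      rw [h4, RCLike.star_def, Complex.mul_conj]
    rw [h3, Matrix.one_apply_eq] at h
    exact_mod_cast h
  have hsupp2 : ∀ i j, q j = 0 → p i * c i j = 0 := by
    intro i j hqj
    have h := hsupp j hqj
    rw [hz j] at h
    have h2 : ∑ i, p i * c i j = 0 := by exact_mod_cast h
    exact (Finset.sum_eq_zero_iff_of_nonneg
      (fun i _ => mul_nonneg (hp i) (hc i j))).1 h2 i (Finset.mem_univ i)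
  have htr : (σ * (W * Matrix.diagonal (fun j => (Real.logb 2 (q j) : ℂ)) * Wᴴ)).trace
      = ((∑ j, (∑ i, p i * c i j) * Real.logb 2 (q j) : ℝ) : ℂ) := by
    rw [trace_conj_diag]
    push_cast
    apply Finset.sum_congr rfl
    intro j _
    rw [hz j]
    push_cast
    ring
  rw [htr, Complex.ofReal_re, hent, neg_neg]
  calc ∑ j, (∑ i, p i * c i j) * Real.logb 2 (q j)
      = ∑ i, ∑ j, p i * c i j * Real.logb 2 (q j) := by
        rw [Finset.sum_comm]
        apply Finset.sum_congr rfl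
        intro j _
        rw [Finset.sum_mul]
    _ ≤ ∑ i, p i * Real.logb 2 (p i) :=
        klein_scalar p q c hp hq hc hrow hcol hps hqs hsupp2


variable {α β : Type*} [Fintype α] [Fintype β] [DecidableEq α] [DecidableEq β]

/-- Partial trace over the first factor. -/
noncomputable def ptL (σ : Matrix (α × β) (α × β) ℂ) : Matrix β β ℂ :=
  Matrix.of fun p q => ∑ x, σ (x, p) (x, q)

/-- Partial trace over the second factor. -/
noncomputable def ptR (σ : Matrix (α × β) (α × β) ℂ) : Matrix α α ℂ :=
  Matrix.of fun k l => ∑ j, σ (k, j) (l, j)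

lemma ptL_trace (σ : Matrix (α × β) (α × β) ℂ) : (ptL σ).trace = σ.trace := by
  rw [Matrix.trace, Matrix.trace]
  simp only [Matrix.diag, ptL, Matrix.of_apply]
  rw [Fintype.sum_prod_type]
  exact Finset.sum_comm

lemma ptR_trace (σ : Matrix (α × β) (α × β) ℂ) : (ptR σ).trace = σ.trace := by
  rw [Matrix.trace, Matrix.trace]
  simp only [Matrix.diag, ptR, Matrix.of_apply]
  rw [Fintype.sum_prod_type]

lemma psd_diag_nonneg {γ : Type*} [Fintype γ] [DecidableEq γ]
    {M : Matrix γ γ ℂ} (hM : M.PosSemidef) (j : γ) : 0 ≤ M j j := by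
  have h := hM.dotProduct_mulVec_nonneg (Pi.single j 1)
  rw [mulVec_single, dotProduct, Finset.sum_eq_single j
    (by intro b _ hb; simp [Pi.single_apply, hb])
    (by intro h; exact absurd (Finset.mem_univ j) h)] at h
  simpa using h

lemma ptL_isHermitian {σ : Matrix (α × β) (α × β) ℂ} (hσ : σ.IsHermitian) :
    (ptL σ).IsHermitian := by
  unfold Matrix.IsHermitian
  ext p q
  rw [conjTranspose_apply]
  simp only [ptL, Matrix.of_apply, star_sum]
  apply Finset.sum_congr rfl
  intro x _
  rw [← conjTranspose_apply, hσ]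

lemma ptR_isHermitian {σ : Matrix (α × β) (α × β) ℂ} (hσ : σ.IsHermitian) :
    (ptR σ).IsHermitian := by
  unfold Matrix.IsHermitian
  ext p q
  rw [conjTranspose_apply]
  simp only [ptR, Matrix.of_apply, star_sum]
  apply Finset.sum_congr rfl
  intro x _
  rw [← conjTranspose_apply, hσ]

lemma ptL_posSemidef {σ : Matrix (α × β) (α × β) ℂ} (hσ : σ.PosSemidef) :
    (ptL σ).PosSemidef := by
  refine Matrix.posSemidef_iff_dotProduct_mulVec.mpr ⟨ptL_isHermitian hσ.1, ?_⟩
  intro v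
  set w : α → (α × β → ℂ) := fun k x => if x.1 = k then v x.2 else 0 with hw
  have hmv : ∀ k (x : α × β), (σ *ᵥ w k) x = ∑ q, σ x (k, q) * v q := by
    intro k x
    rw [mulVec, dotProduct, Fintype.sum_prod_type]
    rw [Finset.sum_eq_single k]
    · apply Finset.sum_congr rfl; intro q _; simp [hw]
    · intro a _ ha; apply Finset.sum_eq_zero; intro q _; simp [hw, ha]
    · intro h; exact absurd (Finset.mem_univ k) h
  have hterm : ∀ k, star (w k) ⬝ᵥ (σ *ᵥ w k)
      = ∑ p, ∑ q, star (v p) * (σ (k, p) (k, q) * v q) := by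
    intro k
    rw [dotProduct, Fintype.sum_prod_type]
    rw [Finset.sum_eq_single k]
    · apply Finset.sum_congr rfl
      intro p _
      rw [hmv k (k, p)]
      have h1 : star (w k) (k, p) = star (v p) := by simp [hw]
      rw [h1, Finset.mul_sum]
    · intro a _ ha
      apply Finset.sum_eq_zero
      intro p _
      have h1 : star (w k) (a, p) = 0 := by simp [hw, ha]
      rw [h1, zero_mul]
    · intro h; exact absurd (Finset.mem_univ k) h
  have key : star v ⬝ᵥ (ptL σ *ᵥ v) = ∑ k, star (w k) ⬝ᵥ (σ *ᵥ w k) := by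
    calc star v ⬝ᵥ (ptL σ *ᵥ v)
        = ∑ p, ∑ q, ∑ k, star (v p) * (σ (k, p) (k, q) * v q) := by
          simp only [dotProduct, mulVec, ptL, Matrix.of_apply, Pi.star_apply,
            Finset.sum_mul, Finset.mul_sum]
      _ = ∑ p, ∑ k, ∑ q, star (v p) * (σ (k, p) (k, q) * v q) := by
          apply Finset.sum_congr rfl; intro p _; exact Finset.sum_comm
      _ = ∑ k, ∑ p, ∑ q, star (v p) * (σ (k, p) (k, q) * v q) := Finset.sum_comm
      _ = ∑ k, star (w k) ⬝ᵥ (σ *ᵥ w k) := by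
          apply Finset.sum_congr rfl; intro k _; exact (hterm k).symm
  rw [key]
  exact Finset.sum_nonneg fun k _ => hσ.dotProduct_mulVec_nonneg (w k)

lemma ptR_posSemidef {σ : Matrix (α × β) (α × β) ℂ} (hσ : σ.PosSemidef) :
    (ptR σ).PosSemidef := by
  refine Matrix.posSemidef_iff_dotProduct_mulVec.mpr ⟨ptR_isHermitian hσ.1, ?_⟩
  intro v
  set w : β → (α × β → ℂ) := fun l x => if x.2 = l then v x.1 else 0 with hw
  have hmv : ∀ l (x : α × β), (σ *ᵥ w l) x = ∑ q, σ x (q, l) * v q := by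
    intro l x
    rw [mulVec, dotProduct, Fintype.sum_prod_type, Finset.sum_comm]
    rw [Finset.sum_eq_single l]
    · apply Finset.sum_congr rfl; intro q _; simp [hw]
    · intro a _ ha; apply Finset.sum_eq_zero; intro q _; simp [hw, ha]
    · intro h; exact absurd (Finset.mem_univ l) h
  have hterm : ∀ l, star (w l) ⬝ᵥ (σ *ᵥ w l)
      = ∑ p, ∑ q, star (v p) * (σ (p, l) (q, l) * v q) := by
    intro l
    rw [dotProduct, Fintype.sum_prod_type, Finset.sum_comm]
    rw [Finset.sum_eq_single l]
    · apply Finset.sum_congr rfl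
      intro p _
      rw [hmv l (p, l)]
      have h1 : star (w l) (p, l) = star (v p) := by simp [hw]
      rw [h1, Finset.mul_sum]
    · intro a _ ha
      apply Finset.sum_eq_zero
      intro p _
      have h1 : star (w l) (p, a) = 0 := by simp [hw, ha]
      rw [h1, zero_mul]
    · intro h; exact absurd (Finset.mem_univ l) h
  have key : star v ⬝ᵥ (ptR σ *ᵥ v) = ∑ l, star (w l) ⬝ᵥ (σ *ᵥ w l) := by
    calc star v ⬝ᵥ (ptR σ *ᵥ v)
        = ∑ p, ∑ q, ∑ l, star (v p) * (σ (p, l) (q, l) * v q) := by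
          simp only [dotProduct, mulVec, ptR, Matrix.of_apply, Pi.star_apply,
            Finset.sum_mul, Finset.mul_sum]
      _ = ∑ p, ∑ l, ∑ q, star (v p) * (σ (p, l) (q, l) * v q) := by
          apply Finset.sum_congr rfl; intro p _; exact Finset.sum_comm
      _ = ∑ l, ∑ p, ∑ q, star (v p) * (σ (p, l) (q, l) * v q) := Finset.sum_comm
      _ = ∑ l, star (w l) ⬝ᵥ (σ *ᵥ w l) := by
          apply Finset.sum_congr rfl; intro l _; exact (hterm l).symm
  rw [key]
  exact Finset.sum_nonneg fun l _ => hσ.dotProduct_mulVec_nonneg (w l)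


lemma conj_entry {n' m' : Type*} [Fintype n'] [Fintype m'] (B : Matrix n' m' ℂ)
    (σ : Matrix n' n' ℂ) (j j' : m') :
    (Bᴴ * σ * B) j j' = ∑ y, ∑ x, star (B y j) * σ y x * B x j' := by
  simp only [Matrix.mul_apply, conjTranspose_apply, Finset.sum_mul]
  exact Finset.sum_comm

lemma sum_mul_one_entry {γ : Type*} [Fintype γ] [DecidableEq γ] (h : γ → ℂ) (b : γ) :
    ∑ b', h b' * (1 : Matrix γ γ ℂ) b' b = h b := by
  rw [Finset.sum_eq_single b]
  · rw [Matrix.one_apply_eq, mul_one]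
  · intro c _ hc; rw [Matrix.one_apply_ne hc, mul_zero]
  · intro hmem; exact absurd (Finset.mem_univ b) hmem

lemma kron_sum_right (σ : Matrix (α × β) (α × β) ℂ)
    (X : Matrix α α ℂ) (Y : Matrix β β ℂ) (hY1 : Y * Yᴴ = 1) (k : α) :
    ∑ l, ((X ⊗ₖ Y)ᴴ * σ * (X ⊗ₖ Y)) (k, l) (k, l) = (Xᴴ * ptR σ * X) k k := by
  have hcollapse : ∀ (y x : α × β),
      ∑ l, star ((X ⊗ₖ Y) y (k, l)) * σ y x * ((X ⊗ₖ Y) x (k, l))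
        = star (X y.1 k) * σ y x * X x.1 k * (1 : Matrix β β ℂ) x.2 y.2 := by
    intro y x
    have h1 : ∀ l, star ((X ⊗ₖ Y) y (k, l)) * σ y x * ((X ⊗ₖ Y) x (k, l))
        = (star (X y.1 k) * σ y x * X x.1 k) * (Y x.2 l * star (Y y.2 l)) := by
      intro l
      rw [kroneckerMap_apply, kroneckerMap_apply, star_mul']
      ring
    simp_rw [h1]
    rw [← Finset.mul_sum]
    have h2 : ∑ l, Y x.2 l * star (Y y.2 l) = (1 : Matrix β β ℂ) x.2 y.2 := by
      have h := congrFun (congrFun hY1 x.2) y.2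
      rw [Matrix.mul_apply] at h
      simp only [conjTranspose_apply] at h
      exact h
    rw [h2]
  calc ∑ l, ((X ⊗ₖ Y)ᴴ * σ * (X ⊗ₖ Y)) (k, l) (k, l)
      = ∑ l, ∑ y, ∑ x, star ((X ⊗ₖ Y) y (k, l)) * σ y x * ((X ⊗ₖ Y) x (k, l)) := by
        apply Finset.sum_congr rfl; intro l _; exact conj_entry _ _ _ _
    _ = ∑ y, ∑ x, ∑ l, star ((X ⊗ₖ Y) y (k, l)) * σ y x * ((X ⊗ₖ Y) x (k, l)) := by
        rw [Finset.sum_comm]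
        apply Finset.sum_congr rfl; intro y _
        exact Finset.sum_comm
    _ = ∑ y, ∑ x, star (X y.1 k) * σ y x * X x.1 k * (1 : Matrix β β ℂ) x.2 y.2 := by
        apply Finset.sum_congr rfl; intro y _
        apply Finset.sum_congr rfl; intro x _
        exact hcollapse y x
    _ = ∑ a, ∑ b, ∑ a', star (X a k) * σ (a, b) (a', b) * X a' k := by
        rw [Fintype.sum_prod_type]
        apply Finset.sum_congr rfl; intro a _
        apply Finset.sum_congr rfl; intro b _
        rw [Fintype.sum_prod_type]
        apply Finset.sum_congr rfl; intro a' _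
        exact sum_mul_one_entry (fun b' => star (X a k) * σ (a, b) (a', b') * X a' k) b
    _ = ∑ a, ∑ a', star (X a k) * (ptR σ) a a' * X a' k := by
        apply Finset.sum_congr rfl; intro a _
        rw [Finset.sum_comm]
        apply Finset.sum_congr rfl; intro a' _
        simp only [ptR, Matrix.of_apply, Finset.mul_sum, Finset.sum_mul]
    _ = (Xᴴ * ptR σ * X) k k := (conj_entry X (ptR σ) k k).symm

lemma kron_sum_left (σ : Matrix (α × β) (α × β) ℂ)
    (X : Matrix α α ℂ) (Y : Matrix β β ℂ) (hX1 : X * Xᴴ = 1) (l : β) :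
    ∑ k, ((X ⊗ₖ Y)ᴴ * σ * (X ⊗ₖ Y)) (k, l) (k, l) = (Yᴴ * ptL σ * Y) l l := by
  have hcollapse : ∀ (y x : α × β),
      ∑ k, star ((X ⊗ₖ Y) y (k, l)) * σ y x * ((X ⊗ₖ Y) x (k, l))
        = star (Y y.2 l) * σ y x * Y x.2 l * (1 : Matrix α α ℂ) x.1 y.1 := by
    intro y x
    have h1 : ∀ k, star ((X ⊗ₖ Y) y (k, l)) * σ y x * ((X ⊗ₖ Y) x (k, l))
        = (star (Y y.2 l) * σ y x * Y x.2 l) * (X x.1 k * star (X y.1 k)) := by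
      intro k
      rw [kroneckerMap_apply, kroneckerMap_apply, star_mul']
      ring
    simp_rw [h1]
    rw [← Finset.mul_sum]
    have h2 : ∑ k, X x.1 k * star (X y.1 k) = (1 : Matrix α α ℂ) x.1 y.1 := by
      have h := congrFun (congrFun hX1 x.1) y.1
      rw [Matrix.mul_apply] at h
      simp only [conjTranspose_apply] at h
      exact h
    rw [h2]
  calc ∑ k, ((X ⊗ₖ Y)ᴴ * σ * (X ⊗ₖ Y)) (k, l) (k, l)
      = ∑ k, ∑ y, ∑ x, star ((X ⊗ₖ Y) y (k, l)) * σ y x * ((X ⊗ₖ Y) x (k, l)) := by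
        apply Finset.sum_congr rfl; intro k _; exact conj_entry _ _ _ _
    _ = ∑ y, ∑ x, ∑ k, star ((X ⊗ₖ Y) y (k, l)) * σ y x * ((X ⊗ₖ Y) x (k, l)) := by
        rw [Finset.sum_comm]
        apply Finset.sum_congr rfl; intro y _
        exact Finset.sum_comm
    _ = ∑ y, ∑ x, star (Y y.2 l) * σ y x * Y x.2 l * (1 : Matrix α α ℂ) x.1 y.1 := by
        apply Finset.sum_congr rfl; intro y _
        apply Finset.sum_congr rfl; intro x _
        exact hcollapse y x
    _ = ∑ a, ∑ b, ∑ b', star (Y b l) * σ (a, b) (a, b') * Y b' l := by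
        rw [Fintype.sum_prod_type]
        apply Finset.sum_congr rfl; intro a _
        apply Finset.sum_congr rfl; intro b _
        rw [Fintype.sum_prod_type, Finset.sum_comm]
        apply Finset.sum_congr rfl; intro b' _
        exact sum_mul_one_entry (fun a' => star (Y b l) * σ (a, b) (a', b') * Y b' l) a
    _ = ∑ b, ∑ b', star (Y b l) * (ptL σ) b b' * Y b' l := by
        rw [Finset.sum_comm]
        apply Finset.sum_congr rfl; intro b _
        rw [Finset.sum_comm]
        apply Finset.sum_congr rfl; intro b' _
        simp only [ptL, Matrix.of_apply, Finset.mul_sum, Finset.sum_mul]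
    _ = (Yᴴ * ptL σ * Y) l l := (conj_entry Y (ptL σ) l l).symm


lemma conj_cancel {n : Type*} [Fintype n] [DecidableEq n] (X : Matrix n n ℂ)
    (hX2 : Xᴴ * X = 1) (D : Matrix n n ℂ) : Xᴴ * (X * D * Xᴴ) * X = D := by
  calc Xᴴ * (X * D * Xᴴ) * X = Xᴴ * X * D * (Xᴴ * X) := by simp only [Matrix.mul_assoc]
    _ = D := by rw [hX2, Matrix.one_mul, Matrix.mul_one]

lemma kron_conjT {α β : Type*} [Fintype α] [Fintype β]
    (A : Matrix α α ℂ) (B : Matrix β β ℂ) : (A ⊗ₖ B)ᴴ = Aᴴ ⊗ₖ Bᴴ := by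
  ext x y
  simp [Matrix.conjTranspose_apply, kroneckerMap_apply, star_mul', mul_comm]

end Helpers

/-- for the completely factorizable channel `Λ(ρ) = Tr_F[U(ρ ⊗ ω_{B₁})U†]`
built from a unitary `U : B₁ ⊗ Q₁ → F ⊗ Q₂`, every density matrix `η` on `Q₁` satisfies
`H(Λ(η)) − H(η) ≥ log₂(dim Q₂ / dim Q₁) = log₂(dim B₁ / dim F)`. -/
theorem factorizableChannel_entropy_gain (b q1 f q2 : ℕ)
    (hb : 0 < b) (hq1 : 0 < q1) (hf : 0 < f) (hq2 : 0 < q2)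
    (U : Matrix (Fin f × Fin q2) (Fin b × Fin q1) ℂ)
    (hU1 : U * Uᴴ = 1) (hU2 : Uᴴ * U = 1)
    (η : Matrix (Fin q1) (Fin q1) ℂ) (hη : η.PosSemidef) (hη1 : η.trace = 1) :
    vnEntropy (factorizableChannel b q1 f q2 U η) - vnEntropy η ≥
        Real.logb 2 ((q2 : ℝ) / (q1 : ℝ)) ∧
      Real.logb 2 ((q2 : ℝ) / (q1 : ℝ)) = Real.logb 2 ((b : ℝ) / (f : ℝ)) := by
  classical
  -- dimension bookkeeping
  have hdim : b * q1 = f * q2 := by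
    have h := card_eq_of_unitary U hU1 hU2
    simpa [Fintype.card_prod] using h
  have hdimR : (b : ℝ) * q1 = (f : ℝ) * q2 := by exact_mod_cast hdim
  have hbR : (0:ℝ) < b := by exact_mod_cast hb
  have hq1R : (0:ℝ) < q1 := by exact_mod_cast hq1
  have hfR : (0:ℝ) < f := by exact_mod_cast hf
  have hq2R : (0:ℝ) < q2 := by exact_mod_cast hq2
  have hratio : (q2 : ℝ) / q1 = (b : ℝ) / f := by
    rw [div_eq_div_iff hq1R.ne' hfR.ne']
    nlinarith [hdimR]
  have hgoal2 : Real.logb 2 ((q2:ℝ)/q1) = Real.logb 2 ((b:ℝ)/f) := by rw [hratio]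
  refine ⟨?_, hgoal2⟩
  -- spectral data for η
  have hηH : η.IsHermitian := hη.1
  set V := (hηH.eigenvectorUnitary : Matrix (Fin q1) (Fin q1) ℂ) with hVdef
  obtain ⟨hV1, hV2⟩ := eigenvectorUnitary_unitary hηH
  set μ := hηH.eigenvalues with hμdef
  have hμ0 : ∀ i, 0 ≤ μ i := fun i => hη.eigenvalues_nonneg i
  have hspη : η = V * Matrix.diagonal (fun i => (μ i : ℂ)) * Vᴴ := by
    have h := hηH.spectral_theorem
    rw [Unitary.conjStarAlgAut_apply, Matrix.star_eq_conjTranspose] at h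
    exact h
  have hμ1 : ∑ i, μ i = 1 := by
    have h := (congrArg Matrix.trace hspη).trans (trace_conj_diag_val V hV2 μ)
    rw [hη1] at h
    exact_mod_cast h.symm
  have hηent : vnEntropy η = -∑ i, μ i * Real.logb 2 (μ i) :=
    (congrArg vnEntropy hspη).trans (entropy_conj_diag V hV1 hV2 μ)
  -- the global state σ
  set ω : Matrix (Fin b) (Fin b) ℂ := (b : ℂ)⁻¹ • 1 with hωdef
  set σ : Matrix (Fin f × Fin q2) (Fin f × Fin q2) ℂ := U * (ω ⊗ₖ η) * Uᴴ with hσdef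
  set W0 : Matrix (Fin f × Fin q2) (Fin b × Fin q1) ℂ
    := U * ((1 : Matrix (Fin b) (Fin b) ℂ) ⊗ₖ V) with hW0def
  set d0 : Fin b × Fin q1 → ℝ := fun ki => μ ki.2 / b with hd0def
  have hkron1 : ((1 : Matrix (Fin b) (Fin b) ℂ) ⊗ₖ V)
      * ((1 : Matrix (Fin b) (Fin b) ℂ) ⊗ₖ V)ᴴ = 1 := by
    rw [kron_conjT, Matrix.conjTranspose_one, ← mul_kronecker_mul, Matrix.one_mul, hV1,
      one_kronecker_one]
  have hkron2 : ((1 : Matrix (Fin b) (Fin b) ℂ) ⊗ₖ V)ᴴ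
      * ((1 : Matrix (Fin b) (Fin b) ℂ) ⊗ₖ V) = 1 := by
    rw [kron_conjT, Matrix.conjTranspose_one, ← mul_kronecker_mul, Matrix.one_mul, hV2,
      one_kronecker_one]
  have hW01 : W0 * W0ᴴ = 1 := by
    rw [hW0def, Matrix.conjTranspose_mul, Matrix.mul_assoc,
      ← Matrix.mul_assoc ((1 : Matrix (Fin b) (Fin b) ℂ) ⊗ₖ V), hkron1, Matrix.one_mul, hU1]
  have hW02 : W0ᴴ * W0 = 1 := by
    rw [hW0def, Matrix.conjTranspose_mul, Matrix.mul_assoc,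
      ← Matrix.mul_assoc Uᴴ, hU2, Matrix.one_mul, hkron2]
  have hDkron : Matrix.diagonal (fun ki : Fin b × Fin q1 => (d0 ki : ℂ))
      = ω ⊗ₖ Matrix.diagonal (fun i => (μ i : ℂ)) := by
    rw [hωdef, Matrix.smul_one_eq_diagonal, diagonal_kronecker_diagonal]
    congr 1
    funext ki
    rw [hd0def]
    push_cast
    field_simp
  have hkronη : ω ⊗ₖ η = ((1 : Matrix (Fin b) (Fin b) ℂ) ⊗ₖ V)
      * Matrix.diagonal (fun ki : Fin b × Fin q1 => (d0 ki : ℂ))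
      * ((1 : Matrix (Fin b) (Fin b) ℂ) ⊗ₖ V)ᴴ := by
    rw [hDkron, kron_conjT, Matrix.conjTranspose_one, ← mul_kronecker_mul,
      ← mul_kronecker_mul, Matrix.one_mul, Matrix.mul_one, ← hspη]
  have hσW : σ = W0 * Matrix.diagonal (fun ki : Fin b × Fin q1 => (d0 ki : ℂ)) * W0ᴴ := by
    rw [hσdef, hkronη, hW0def, Matrix.conjTranspose_mul]
    simp only [Matrix.mul_assoc]
  have hd00 : ∀ ki, 0 ≤ d0 ki := fun ki => div_nonneg (hμ0 ki.2) (Nat.cast_nonneg b)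
  have hσPSD : σ.PosSemidef := by rw [hσW]; exact posSemidef_conj_diag W0 d0 hd00
  have hd0sum : ∑ ki : Fin b × Fin q1, d0 ki = 1 := by
    rw [Fintype.sum_prod_type]
    simp only [hd0def]
    rw [Finset.sum_const, Finset.card_univ, Fintype.card_fin, ← Finset.sum_div, hμ1, nsmul_eq_mul]
    field_simp
  have hσ1 : σ.trace = 1 := by
    rw [hσW, trace_conj_diag_val W0 hW02 d0, hd0sum]
    norm_num
  have hσent : vnEntropy σ = Real.logb 2 b + vnEntropy η := by
    rw [hσW, entropy_conj_diag W0 hW01 hW02 d0, hηent]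
    have key : ∀ x : ℝ, 0 ≤ x →
        x / b * Real.logb 2 (x / b) = x * Real.logb 2 x / b - x * Real.logb 2 b / b := by
      intro x hx
      rcases eq_or_lt_of_le hx with h | h
      · simp [← h]
      · rw [Real.logb_div h.ne' hbR.ne']
        field_simp
    have hsum : ∑ ki : Fin b × Fin q1, d0 ki * Real.logb 2 (d0 ki)
        = ∑ i, μ i * Real.logb 2 (μ i) - Real.logb 2 b := by
      rw [Fintype.sum_prod_type]
      simp only [hd0def]
      have : ∀ k : Fin b, ∑ i, μ i / b * Real.logb 2 (μ i / b)
          = ∑ i, (μ i * Real.logb 2 (μ i) / b - μ i * Real.logb 2 b / b) := by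
        intro k
        exact Finset.sum_congr rfl fun i _ => key (μ i) (hμ0 i)
      rw [Finset.sum_congr rfl fun k _ => this k, Finset.sum_const, Finset.card_univ,
        Fintype.card_fin, Finset.sum_sub_distrib, ← Finset.sum_div, ← Finset.sum_div,
        ← Finset.sum_mul, hμ1, nsmul_eq_mul]
      field_simp
    rw [hsum]
    ring
  -- partial traces
  set Aρ : Matrix (Fin f) (Fin f) ℂ := ptR σ with hAdef
  set Bρ : Matrix (Fin q2) (Fin q2) ℂ := ptL σ with hBdef
  have hchan : factorizableChannel b q1 f q2 U η = Bρ := rfl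
  have hAps : Aρ.PosSemidef := ptR_posSemidef hσPSD
  have hBps : Bρ.PosSemidef := ptL_posSemidef hσPSD
  have hAtr : Aρ.trace = 1 := (ptR_trace σ).trans hσ1
  have hBtr : Bρ.trace = 1 := (ptL_trace σ).trans hσ1
  -- spectral data for the partial traces
  set X := (hAps.1.eigenvectorUnitary : Matrix (Fin f) (Fin f) ℂ) with hXdef
  obtain ⟨hX1, hX2⟩ := eigenvectorUnitary_unitary hAps.1
  set a := hAps.1.eigenvalues with hadef
  have ha0 : ∀ k, 0 ≤ a k := fun k => hAps.eigenvalues_nonneg k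
  have hspA : Aρ = X * Matrix.diagonal (fun k => (a k : ℂ)) * Xᴴ := by
    have h := hAps.1.spectral_theorem
    rw [Unitary.conjStarAlgAut_apply, Matrix.star_eq_conjTranspose] at h
    exact h
  have ha1 : ∑ k, a k = 1 := by
    have h := (congrArg Matrix.trace hspA).trans (trace_conj_diag_val X hX2 a)
    rw [hAtr] at h
    exact_mod_cast h.symm
  have hAent : vnEntropy Aρ = -∑ k, a k * Real.logb 2 (a k) :=
    (congrArg vnEntropy hspA).trans (entropy_conj_diag X hX1 hX2 a)
  set Y := (hBps.1.eigenvectorUnitary : Matrix (Fin q2) (Fin q2) ℂ) with hYdef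
  obtain ⟨hY1, hY2⟩ := eigenvectorUnitary_unitary hBps.1
  set c := hBps.1.eigenvalues with hcdef
  have hc0 : ∀ l, 0 ≤ c l := fun l => hBps.eigenvalues_nonneg l
  have hspB : Bρ = Y * Matrix.diagonal (fun l => (c l : ℂ)) * Yᴴ := by
    have h := hBps.1.spectral_theorem
    rw [Unitary.conjStarAlgAut_apply, Matrix.star_eq_conjTranspose] at h
    exact h
  have hc1 : ∑ l, c l = 1 := by
    have h := (congrArg Matrix.trace hspB).trans (trace_conj_diag_val Y hY2 c)
    rw [hBtr] at h
    exact_mod_cast h.symm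
  have hBent : vnEntropy Bρ = -∑ l, c l * Real.logb 2 (c l) :=
    (congrArg vnEntropy hspB).trans (entropy_conj_diag Y hY1 hY2 c)
  -- Klein inequality setup
  set W1 : Matrix (Fin f × Fin q2) (Fin f × Fin q2) ℂ := X ⊗ₖ Y with hW1def
  have hW11 : W1 * W1ᴴ = 1 := by
    rw [hW1def, kron_conjT, ← mul_kronecker_mul, hX1, hY1, one_kronecker_one]
  have hW12 : W1ᴴ * W1 = 1 := by
    rw [hW1def, kron_conjT, ← mul_kronecker_mul, hX2, hY2, one_kronecker_one]
  set qd : Fin f × Fin q2 → ℝ := fun kl => a kl.1 * c kl.2 with hqddef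
  have hqd0 : ∀ kl, 0 ≤ qd kl := fun kl => mul_nonneg (ha0 kl.1) (hc0 kl.2)
  have hqds : ∑ kl : Fin f × Fin q2, qd kl = 1 := by
    rw [Fintype.sum_prod_type]
    simp only [hqddef]
    rw [← Finset.sum_mul_sum]
    rw [ha1, hc1, one_mul]
  -- diagonal entries of the conjugated state
  have hzsum_r : ∀ k, ∑ l, (W1ᴴ * σ * W1) (k, l) (k, l) = ((a k : ℝ) : ℂ) := by
    intro k
    rw [hW1def, kron_sum_right σ X Y hY1 k]
    have h : Xᴴ * Aρ * X = Matrix.diagonal (fun i => (a i : ℂ)) := by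
      rw [congrArg (fun S => Xᴴ * S * X) hspA]
      exact conj_cancel X hX2 _
    rw [h, Matrix.diagonal_apply_eq]
  have hzsum_l : ∀ l, ∑ k, (W1ᴴ * σ * W1) (k, l) (k, l) = ((c l : ℝ) : ℂ) := by
    intro l
    rw [hW1def, kron_sum_left σ X Y hX1 l]
    have h : Yᴴ * Bρ * Y = Matrix.diagonal (fun i => (c i : ℂ)) := by
      rw [congrArg (fun S => Yᴴ * S * Y) hspB]
      exact conj_cancel Y hY2 _
    rw [h, Matrix.diagonal_apply_eq]
  have hzpos : ∀ kl, 0 ≤ (W1ᴴ * σ * W1) kl kl :=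
    fun kl => psd_diag_nonneg (hσPSD.conjTranspose_mul_mul_same W1) kl
  set sre : Fin f × Fin q2 → ℝ := fun kl => ((W1ᴴ * σ * W1) kl kl).re with hsredef
  have hsre0 : ∀ kl, 0 ≤ sre kl := by
    intro kl
    have h := hzpos kl
    rw [Complex.nonneg_iff] at h
    exact h.1
  have hzreal : ∀ kl, (W1ᴴ * σ * W1) kl kl = ((sre kl : ℝ) : ℂ) := by
    intro kl
    have h := hzpos kl
    rw [Complex.nonneg_iff] at h
    exact Complex.ext rfl h.2.symm
  have hssum_r : ∀ k, ∑ l, sre (k, l) = a k := by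
    intro k
    have h := hzsum_r k
    rw [Finset.sum_congr rfl (fun l _ => hzreal (k, l))] at h
    exact_mod_cast h
  have hssum_l : ∀ l, ∑ k, sre (k, l) = c l := by
    intro l
    have h := hzsum_l l
    rw [Finset.sum_congr rfl (fun k _ => hzreal (k, l))] at h
    exact_mod_cast h
  have hsupp : ∀ kl, qd kl = 0 → (W1ᴴ * σ * W1) kl kl = 0 := by
    rintro ⟨k, l⟩ h0
    rcases mul_eq_zero.1 h0 with hk | hl
    · have hsum : ∑ l', sre (k, l') = 0 := by rw [hssum_r k, hk]
      have hz : sre (k, l) = 0 := (Finset.sum_eq_zero_iff_of_nonneg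
        (fun l' _ => hsre0 (k, l'))).1 hsum l (Finset.mem_univ l)
      rw [hzreal (k, l), hz, Complex.ofReal_zero]
    · have hsum : ∑ k', sre (k', l) = 0 := by rw [hssum_l l, hl]
      have hz : sre (k, l) = 0 := (Finset.sum_eq_zero_iff_of_nonneg
        (fun k' _ => hsre0 (k', l))).1 hsum k (Finset.mem_univ k)
      rw [hzreal (k, l), hz, Complex.ofReal_zero]
  have hK := klein_matrix σ hσPSD hσ1 W1 hW11 hW12 qd hqd0 hqds hsupp
  -- identify the LHS of Klein with -H(A) - H(B)
  have hLHS : (σ * (W1 * Matrix.diagonal (fun j => (Real.logb 2 (qd j) : ℂ)) * W1ᴴ)).trace.re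
      = (∑ k, a k * Real.logb 2 (a k)) + (∑ l, c l * Real.logb 2 (c l)) := by
    rw [trace_conj_diag]
    have h1 : ∀ kl : Fin f × Fin q2, (W1ᴴ * σ * W1) kl kl * (Real.logb 2 (qd kl) : ℂ)
        = ((sre kl * Real.logb 2 (qd kl) : ℝ) : ℂ) := by
      intro kl
      rw [hzreal kl]
      push_cast
      ring
    rw [Finset.sum_congr rfl (fun kl _ => h1 kl), ← Complex.ofReal_sum]
    rw [Complex.ofReal_re]
    have h2 : ∀ kl : Fin f × Fin q2, sre kl * Real.logb 2 (qd kl)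
        = sre kl * Real.logb 2 (a kl.1) + sre kl * Real.logb 2 (c kl.2) := by
      intro kl
      by_cases h : qd kl = 0
      · have hz : sre kl = 0 := by
          have := hsupp kl h
          rw [hzreal kl] at this
          exact_mod_cast this
        rw [hz]; ring
      · have hak : a kl.1 ≠ 0 := fun hc' => h (by rw [hqddef]; simp [hc'])
        have hcl : c kl.2 ≠ 0 := fun hc' => h (by rw [hqddef]; simp [hc'])
        rw [hqddef]
        rw [Real.logb_mul hak hcl]
        ring
    rw [Finset.sum_congr rfl (fun kl _ => h2 kl), Finset.sum_add_distrib]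
    congr 1
    · rw [Fintype.sum_prod_type]
      apply Finset.sum_congr rfl
      intro k _
      have hy : ∀ y : Fin q2, sre (k, y) * Real.logb 2 (a (k, y).1)
          = sre (k, y) * Real.logb 2 (a k) := fun y => rfl
      rw [Finset.sum_congr rfl fun y _ => hy y, ← Finset.sum_mul, hssum_r k]
    · rw [Fintype.sum_prod_type, Finset.sum_comm]
      apply Finset.sum_congr rfl
      intro l _
      have hx : ∀ x : Fin f, sre (x, l) * Real.logb 2 (c (x, l).2)
          = sre (x, l) * Real.logb 2 (c l) := fun x => rfl
      rw [Finset.sum_congr rfl fun x _ => hx x, ← Finset.sum_mul, hssum_l l]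
  -- subadditivity
  have hsub : vnEntropy σ ≤ vnEntropy Aρ + vnEntropy Bρ := by
    rw [hLHS] at hK
    rw [hAent, hBent]
    linarith
  -- max-entropy bound for the F part
  have hAbound : vnEntropy Aρ ≤ Real.logb 2 f := by
    rw [hAent]
    have hg := gibbs_aux a (fun _ => 1 / (f : ℝ)) ha0
      (fun _ => by positivity) (fun i _ => by positivity)
      (by rw [Finset.sum_const, Finset.card_univ, Fintype.card_fin, ha1, nsmul_eq_mul]; exact le_of_eq (by field_simp))
    have hl : ∑ k, a k * Real.logb 2 (1 / (f : ℝ)) = -Real.logb 2 f := by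
      rw [← Finset.sum_mul, ha1, one_mul, one_div, Real.logb_inv]
    rw [hl] at hg
    linarith
  -- final chain
  rw [hchan, hgoal2, Real.logb_div hbR.ne' hfR.ne']
  have hgain : vnEntropy Bρ ≥ vnEntropy σ - vnEntropy Aρ := by linarith
  rw [hσent] at hgain
  linarith
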